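/- Let n ≥ 1, p ∈ ℂⁿ, and 0 < r < R, and let B_r and B_R denote the closed polydiscs centered at p of polyradius r and R respectively. Let k ≥ 2 and let V₁,…,V_k be holomorphic vector fields on an open neighborhood of B_R. Then the nested commutator satisfies ‖[V₁,[V₂,…,[V_{k−1},V_k]…]]‖_{B_r} ≤ (2n(k−1)/(R−r))^{k−1} · Π_{i=1}^{k} ‖V_i‖_{B_R}. -/

import Mathlib

/-- The Lie bracket of holomorphic vector fields `V, W : Ω → ℂⁿ`,
`[V,W](z) = DW(z)(V(z)) − DV(z)(W(z))`. -/
noncomputable def lieB {n : ℕ} (V W : (Fin n → ℂ) → (Fin n → ℂ)) :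
    (Fin n → ℂ) → (Fin n → ℂ) :=
  fun z => fderiv ℂ W z (V z) - fderiv ℂ V z (W z)

/-- Nested Lie bracket `[L₁,[L₂,…,[L_m, X]…]]` of a list of vector fields with base `X`. -/
noncomputable def nestedBracket {n : ℕ} (L : List ((Fin n → ℂ) → (Fin n → ℂ)))
    (X : (Fin n → ℂ) → (Fin n → ℂ)) : (Fin n → ℂ) → (Fin n → ℂ) :=
  L.foldr lieB X

/-- The closed polydisc of polyradius `r` centered at `p`. -/
def polyDisc {n : ℕ} (p : Fin n → ℂ) (r : ℝ) : Set (Fin n → ℂ) :=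
  {z | ∀ j, ‖z j - p j‖ ≤ r}

/-- `‖V‖_K = max_j sup_{z ∈ K} |V^j(z)|` (the sup over `K` of the sup-norm of `V`). -/
noncomputable def vfNorm {n : ℕ} (V : (Fin n → ℂ) → (Fin n → ℂ))
    (K : Set (Fin n → ℂ)) : ℝ :=
  ⨆ z ∈ K, ‖V z‖


open Metric Set intervalIntegral
set_option maxHeartbeats 1000000
set_option synthInstance.maxHeartbeats 400000

/-- Cauchy estimate for the Fréchet derivative along a line. -/
lemma cauchy_fderiv_bound {E F : Type*} [NormedAddCommGroup E] [NormedSpace ℂ E]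
    [NormedAddCommGroup F] [NormedSpace ℂ F]
    {Ω : Set E} (hΩ : IsOpen Ω) {f : E → F} (hf : DifferentiableOn ℂ f Ω)
    {z : E} {δ M : ℝ} (hδ : 0 < δ) (hsub : closedBall z δ ⊆ Ω)
    (hM : ∀ w ∈ closedBall z δ, ‖f w‖ ≤ M) (u : E) :
    ‖fderiv ℂ f z u‖ ≤ M * ‖u‖ / δ := by
  rcases eq_or_ne u 0 with rfl | hu
  · simp
  have hs : 0 < ‖u‖ := norm_pos_iff.2 hu
  set ρ : ℝ := δ / ‖u‖ with hρdef
  have hρ : 0 < ρ := div_pos hδ hs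
  have hline : ∀ ζ : ℂ, ‖ζ‖ ≤ ρ → z + ζ • u ∈ closedBall z δ := by
    intro ζ hζ
    simp only [mem_closedBall, dist_eq_norm, add_sub_cancel_left, norm_smul]
    calc ‖ζ‖ * ‖u‖ ≤ ρ * ‖u‖ := by gcongr
    _ = δ := div_mul_cancel₀ _ hs.ne'
  have hzΩ : z ∈ Ω := hsub (mem_closedBall_self hδ.le)
  set g : ℂ → F := fun ζ => f (z + ζ • u) with hg
  have hgd : DiffContOnCl ℂ g (ball (0:ℂ) ρ) := by
    constructor
    · intro ζ hζ
      have h1 : DifferentiableAt ℂ f (z + ζ • u) :=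
        hf.differentiableAt (hΩ.mem_nhds (hsub (hline ζ (by
          simpa [dist_eq_norm] using (ball_subset_closedBall hζ)))))
      exact (h1.comp ζ ((differentiableAt_id.smul_const u).const_add z)).differentiableWithinAt
    · have : closure (ball (0:ℂ) ρ) = closedBall 0 ρ := closure_ball _ hρ.ne'
      rw [this]
      refine (hf.continuousOn.comp (Continuous.continuousOn (by fun_prop)) ?_)
      intro ζ hζ
      exact hsub (hline ζ (by simpa [dist_eq_norm] using hζ))
  have hC : ∀ ζ ∈ sphere (0:ℂ) ρ, ‖g ζ‖ ≤ M := by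
    intro ζ hζ
    exact hM _ (hline ζ (by simp at hζ; simp [hζ]))
  have hkey : ‖deriv g 0‖ ≤ M / ρ :=
    Complex.norm_deriv_le_of_forall_mem_sphere_norm_le hρ hgd hC
  have hder : HasDerivAt g (fderiv ℂ f z u) 0 := by
    have h1 : HasFDerivAt f (fderiv ℂ f z) z :=
      (hf.differentiableAt (hΩ.mem_nhds hzΩ)).hasFDerivAt
    have h2 : HasDerivAt (fun ζ : ℂ => z + ζ • u) u 0 := by
      simpa using ((hasDerivAt_id (0:ℂ)).smul_const u).const_add z
    have h1' : HasFDerivAt f (fderiv ℂ f z) (z + (0:ℂ) • u) := by simpa using h1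
    have := h1'.comp_hasDerivAt 0 h2
    simpa [hg, Function.comp_def] using this
  rw [← hder.deriv]
  calc ‖deriv g 0‖ ≤ M / ρ := hkey
  _ = M * ‖u‖ / δ := by rw [hρdef]; field_simp

/-- Hartogs-type regularity: directional derivative of a holomorphic map on ℂⁿ is holomorphic. -/
lemma fderiv_apply_differentiableOn {n : ℕ} {Ω : Set (Fin n → ℂ)} (hΩ : IsOpen Ω)
    {f : (Fin n → ℂ) → (Fin n → ℂ)} (hf : DifferentiableOn ℂ f Ω) (u : Fin n → ℂ) :
    DifferentiableOn ℂ (fun z => fderiv ℂ f z u) Ω := by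
  rcases eq_or_ne u 0 with rfl | hu
  · simp only [map_zero]; exact differentiableOn_const 0
  have hs : 0 < ‖u‖ := norm_pos_iff.2 hu
  intro z0 hz0
  obtain ⟨ε, hε, hball⟩ := Metric.isOpen_iff.1 hΩ z0 hz0
  set δ := ε/4 with hδdef
  have hδ : 0 < δ := by positivity
  have hsub3 : closedBall z0 (3*δ) ⊆ Ω := fun w hw => hball (by
    rw [mem_ball]; rw [mem_closedBall] at hw; dsimp [δ] at *; linarith)
  have hsub23 : closedBall z0 (2*δ) ⊆ closedBall z0 (3*δ) :=
    closedBall_subset_closedBall (by linarith)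
  obtain ⟨M0, hM0⟩ := (isCompact_closedBall z0 (3*δ)).exists_bound_of_continuousOn
      (hf.continuousOn.mono hsub3)
  set M := max M0 0 with hMdef
  have hM : ∀ w ∈ closedBall z0 (3*δ), ‖f w‖ ≤ M := fun w hw => (hM0 w hw).trans (le_max_left _ _)
  have hMnn : (0:ℝ) ≤ M := le_max_right _ _
  have hop : ∀ w ∈ closedBall z0 (2*δ), ‖fderiv ℂ f w‖ ≤ M / δ := by
    intro w hw
    refine ContinuousLinearMap.opNorm_le_bound _ (by positivity) fun v => ?_
    have hsubw : closedBall w δ ⊆ closedBall z0 (3*δ) := by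
      refine closedBall_subset_closedBall' ?_; rw [mem_closedBall] at hw; linarith
    have := cauchy_fderiv_bound hΩ hf hδ (hsubw.trans hsub3) (fun x hx => hM x (hsubw hx)) v
    calc ‖fderiv ℂ f w v‖ ≤ M * ‖v‖ / δ := this
    _ = M / δ * ‖v‖ := by ring
  set ρ := δ / ‖u‖ with hρdef
  have hρ : 0 < ρ := div_pos hδ hs
  have hρu : ∀ θ : ℝ, ‖circleMap 0 ρ θ • u‖ = δ := by
    intro θ
    rw [norm_smul]
    have : ‖circleMap 0 ρ θ‖ = ρ := by
      simpa [abs_of_pos hρ] using abs_circleMap_zero ρ θ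
    rw [this, hρdef]; field_simp
  set c : ℝ → ℂ := fun θ => deriv (circleMap 0 ρ) θ * (circleMap 0 ρ θ) ^ (-2 : ℤ) with hcdef
  set F : (Fin n → ℂ) → ℝ → (Fin n → ℂ) := fun z θ => c θ • f (z + circleMap 0 ρ θ • u)
    with hFdef
  have hmem : ∀ z ∈ ball z0 δ, ∀ θ : ℝ, z + circleMap 0 ρ θ • u ∈ closedBall z0 (2*δ) := by
    intro z hz θ
    rw [mem_closedBall]
    calc dist (z + circleMap 0 ρ θ • u) z0
        ≤ dist (z + circleMap 0 ρ θ • u) z + dist z z0 := dist_triangle _ _ _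
      _ ≤ δ + δ := by
          refine add_le_add ?_ (mem_ball.1 hz).le
          rw [dist_eq_norm, add_sub_cancel_left, hρu]
      _ = 2*δ := by ring
  have hcont_c : Continuous c := by
    rw [hcdef]
    simp only [deriv_circleMap]
    exact ((continuous_circleMap 0 ρ).mul continuous_const).mul
      ((continuous_circleMap 0 ρ).zpow₀ _ (fun θ => Or.inl (circleMap_ne_center hρ.ne')))
  have hcontf : ∀ z ∈ ball z0 δ, Continuous fun θ => F z θ := by
    intro z hz
    refine hcont_c.smul ?_
    rw [continuous_iff_continuousAt]
    intro θ
    have h2 : ContinuousAt (fun θ : ℝ => z + circleMap 0 ρ θ • u) θ :=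
      (continuous_const.add ((continuous_circleMap 0 ρ).smul continuous_const)).continuousAt
    exact ContinuousAt.comp (x := θ) (hf.continuousOn.continuousAt
      (hΩ.mem_nhds (hsub3 (hsub23 (hmem z hz θ))))) h2
  -- Cauchy representation
  have key : ∀ z ∈ ball z0 δ, fderiv ℂ f z u
      = (2 * Real.pi * Complex.I)⁻¹ • ∫ θ in (0:ℝ)..2*Real.pi, F z θ := by
    intro z hz
    set g : ℂ → (Fin n → ℂ) := fun ζ => f (z + ζ • u) with hg
    have hline : ∀ ζ : ℂ, ‖ζ‖ ≤ ρ → z + ζ • u ∈ closedBall z0 (2*δ) := by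
      intro ζ hζ
      rw [mem_closedBall]
      calc dist (z + ζ • u) z0 ≤ dist (z + ζ • u) z + dist z z0 := dist_triangle _ _ _
        _ ≤ δ + δ := by
            refine add_le_add ?_ (mem_ball.1 hz).le
            rw [dist_eq_norm, add_sub_cancel_left, norm_smul]
            calc ‖ζ‖ * ‖u‖ ≤ ρ * ‖u‖ := by gcongr
              _ = δ := by rw [hρdef]; field_simp
        _ = 2*δ := by ring
    have hgd : DiffContOnCl ℂ g (ball (0:ℂ) ρ) := by
      constructor
      · intro ζ hζ
        have h1 : DifferentiableAt ℂ f (z + ζ • u) :=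
          hf.differentiableAt (hΩ.mem_nhds (hsub3 (hsub23 (hline ζ (by
            simpa [dist_eq_norm] using (ball_subset_closedBall hζ))))))
        exact (h1.comp ζ ((differentiableAt_id.smul_const u).const_add z)).differentiableWithinAt
      · have hcl : closure (ball (0:ℂ) ρ) = closedBall 0 ρ := closure_ball _ hρ.ne'
        rw [hcl]
        refine (hf.continuousOn.comp (Continuous.continuousOn (by fun_prop)) ?_)
        intro ζ hζ
        exact hsub3 (hsub23 (hline ζ (by simpa [dist_eq_norm] using hζ)))
    have h1 : deriv g 0 = fderiv ℂ f z u := by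
      have hfd : HasFDerivAt f (fderiv ℂ f z) (z + (0:ℂ) • u) := by
        simpa using (hf.differentiableAt (hΩ.mem_nhds (hsub3 (hsub23 (hline 0 (by
          simp [hρ.le])))))).hasFDerivAt
      have h2 : HasDerivAt (fun ζ : ℂ => z + ζ • u) u 0 := by
        simpa using ((hasDerivAt_id (0:ℂ)).smul_const u).const_add z
      have := hfd.comp_hasDerivAt 0 h2
      exact HasDerivAt.deriv (by simpa [hg, Function.comp_def] using this)
    have h2 : deriv g 0 = (2 * (Real.pi:ℂ) * Complex.I)⁻¹ •
        circleIntegral (fun z => (z - 0) ^ (-2 : ℤ) • g z) 0 ρ := by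
      have H := hgd.deriv_eq_smul_circleIntegral hρ
      have hne : (2 * (Real.pi:ℂ) * Complex.I) ≠ 0 := by
        simp [Real.pi_ne_zero, Complex.I_ne_zero]
      have hfun : (fun z : ℂ => (z - 0) ^ (-2:ℤ) • g z) = fun z => (1 / (z - 0) ^ 2) • g z := by
        funext z; rw [zpow_neg, one_div]; norm_cast
      rw [hfun, H, smul_smul, inv_mul_cancel₀ hne, one_smul]
    rw [← h1, h2]
    congr 1
    rw [circleIntegral]
    refine intervalIntegral.integral_congr fun θ hθ => ?_
    rw [hFdef, hcdef]
    simp only [sub_zero, hg, smul_smul]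
  -- differentiability of the parametric integral at z0
  have hG : HasFDerivAt (fun z => ∫ θ in (0:ℝ)..2*Real.pi, F z θ)
      (∫ θ in (0:ℝ)..2*Real.pi, c θ • fderiv ℂ f (z0 + circleMap 0 ρ θ • u)) z0 := by
    refine (intervalIntegral.hasFDerivAt_integral_of_dominated_of_fderiv_le
      (F := F) (F' := fun z θ => c θ • fderiv ℂ f (z + circleMap 0 ρ θ • u))
      (bound := fun θ => ‖c θ‖ * (M/δ)) (ball_mem_nhds z0 hδ) ?_ ?_ ?_ ?_ ?_ ?_)
    · filter_upwards [ball_mem_nhds z0 hδ] with x hx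
      exact (hcontf x hx).aestronglyMeasurable
    · exact (hcontf z0 (mem_ball_self hδ)).intervalIntegrable _ _
    · have hpath : Measurable fun θ : ℝ => z0 + circleMap 0 ρ θ • u :=
        (continuous_const.add ((continuous_circleMap 0 ρ).smul continuous_const)).measurable
      exact (hcont_c.aestronglyMeasurable).smul
        (((measurable_fderiv ℂ f).comp hpath).aestronglyMeasurable)
    · refine Filter.Eventually.of_forall fun θ _ => fun x hx => ?_
      show ‖c θ • fderiv ℂ f (x + circleMap 0 ρ θ • u)‖ ≤ ‖c θ‖ * (M/δ)
      rw [norm_smul]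
      exact mul_le_mul_of_nonneg_left (hop _ (hmem x hx θ)) (norm_nonneg _)
    · exact ((hcont_c.norm.mul continuous_const).intervalIntegrable _ _)
    · refine Filter.Eventually.of_forall fun θ _ => fun x hx => ?_
      have hfd : HasFDerivAt f (fderiv ℂ f (x + circleMap 0 ρ θ • u))
          (x + circleMap 0 ρ θ • u) :=
        (hf.differentiableAt (hΩ.mem_nhds (hsub3 (hsub23 (hmem x hx θ))))).hasFDerivAt
      have htr : HasFDerivAt (fun z : Fin n → ℂ => z + circleMap 0 ρ θ • u)
          (ContinuousLinearMap.id ℂ (Fin n → ℂ)) x :=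
        (hasFDerivAt_id x).add_const _
      have := (hfd.comp x htr).const_smul (c θ)
      simpa [ContinuousLinearMap.comp_id, hFdef] using this
  have hd0 : DifferentiableAt ℂ
      (fun z => (2 * Real.pi * Complex.I)⁻¹ • ∫ θ in (0:ℝ)..2*Real.pi, F z θ) z0 :=
    by exact (hG.differentiableAt.const_smul (2 * Real.pi * Complex.I)⁻¹)
  have heq : (fun z => fderiv ℂ f z u) =ᶠ[nhds z0]
      (fun z => (2 * Real.pi * Complex.I)⁻¹ • ∫ θ in (0:ℝ)..2*Real.pi, F z θ) := by
    filter_upwards [ball_mem_nhds z0 hδ] with z hz using key z hz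
  exact (heq.differentiableAt_iff.mpr hd0).differentiableWithinAt

lemma fderiv_apply_eq_sum {n : ℕ} (W V : (Fin n → ℂ) → (Fin n → ℂ)) (z : Fin n → ℂ) :
    fderiv ℂ W z (V z) = ∑ j, V z j • fderiv ℂ W z (Pi.single j 1) := by
  have h1 : V z = ∑ j, V z j • (Pi.single j 1 : Fin n → ℂ) := by
    conv_lhs => rw [← Finset.univ_sum_single (V z)]
    refine Finset.sum_congr rfl fun j _ => ?_
    ext i
    rcases eq_or_ne i j with rfl | hij
    · simp
    · simp [Pi.single_apply, hij]
  conv_lhs => rw [h1]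
  rw [map_sum]
  simp [map_smul]

lemma lieB_differentiableOn {n : ℕ} {Ω : Set (Fin n → ℂ)} (hΩ : IsOpen Ω)
    {V W : (Fin n → ℂ) → (Fin n → ℂ)} (hV : DifferentiableOn ℂ V Ω)
    (hW : DifferentiableOn ℂ W Ω) : DifferentiableOn ℂ (lieB V W) Ω := by
  have comp_diff : ∀ (A B : (Fin n → ℂ) → (Fin n → ℂ)), DifferentiableOn ℂ A Ω →
      DifferentiableOn ℂ B Ω → DifferentiableOn ℂ (fun z => fderiv ℂ B z (A z)) Ω := by
    intro A B hA hB
    have : (fun z => fderiv ℂ B z (A z))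
        = fun z => ∑ j, A z j • fderiv ℂ B z (Pi.single j 1) := by
      funext z; exact fderiv_apply_eq_sum B A z
    rw [this]
    refine DifferentiableOn.fun_sum fun j _ => DifferentiableOn.fun_smul ?_
      (fderiv_apply_differentiableOn hΩ hB _)
    exact fun z hz => differentiableWithinAt_pi.1 (hA z hz) j
  exact (comp_diff V W hV hW).sub (comp_diff W V hW hV)

lemma vfNorm_nonneg {n : ℕ} (V : (Fin n → ℂ) → (Fin n → ℂ)) (K : Set (Fin n → ℂ)) :
    0 ≤ vfNorm V K :=
  Real.iSup_nonneg fun _ => Real.iSup_nonneg fun _ => norm_nonneg _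

lemma vfNorm_le {n : ℕ} {V : (Fin n → ℂ) → (Fin n → ℂ)} {K : Set (Fin n → ℂ)} {C : ℝ}
    (hC : 0 ≤ C) (h : ∀ z ∈ K, ‖V z‖ ≤ C) : vfNorm V K ≤ C :=
  Real.iSup_le (fun z => Real.iSup_le (fun hz => h z hz) hC) hC

lemma le_vfNorm {n : ℕ} {V : (Fin n → ℂ) → (Fin n → ℂ)} {K : Set (Fin n → ℂ)} {C : ℝ}
    (h : ∀ z ∈ K, ‖V z‖ ≤ C) {z : Fin n → ℂ} (hz : z ∈ K) : ‖V z‖ ≤ vfNorm V K := by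
  have h1 : ‖V z‖ ≤ ⨆ _ : z ∈ K, ‖V z‖ := by
    refine le_ciSup (f := fun _ : z ∈ K => ‖V z‖) ⟨‖V z‖, ?_⟩ hz
    rintro x ⟨_, rfl⟩; exact le_rfl
  refine h1.trans (le_ciSup (f := fun z => ⨆ _ : z ∈ K, ‖V z‖) ⟨max C 0, ?_⟩ z)
  rintro x ⟨w, rfl⟩
  exact Real.iSup_le (fun hw => (h w hw).trans (le_max_left _ _)) (le_max_right _ _)

lemma nestedBracket_differentiableOn {n : ℕ} {Ω : Set (Fin n → ℂ)} (hΩ : IsOpen Ω)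
    (L : List ((Fin n → ℂ) → (Fin n → ℂ))) (X : (Fin n → ℂ) → (Fin n → ℂ))
    (hL : ∀ W ∈ L, DifferentiableOn ℂ W Ω) (hX : DifferentiableOn ℂ X Ω) :
    DifferentiableOn ℂ (nestedBracket L X) Ω := by
  induction L with
  | nil => exact hX
  | cons W L ih =>
    exact lieB_differentiableOn hΩ (hL W (List.mem_cons_self))
      (ih fun A hA => hL A (List.mem_cons_of_mem _ hA))

lemma exists_vf_bound {n : ℕ} {Ω : Set (Fin n → ℂ)} {g : (Fin n → ℂ) → (Fin n → ℂ)}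
    (hg : DifferentiableOn ℂ g Ω) {p : Fin n → ℂ} {ρ : ℝ}
    (h : closedBall p ρ ⊆ Ω) : ∃ C, ∀ w ∈ closedBall p ρ, ‖g w‖ ≤ C :=
  (isCompact_closedBall p ρ).exists_bound_of_continuousOn (hg.continuousOn.mono h)

lemma main_est {n : ℕ} {Ω : Set (Fin n → ℂ)} (hΩ : IsOpen Ω) {p : Fin n → ℂ} {R : ℝ}
    (hsub : closedBall p R ⊆ Ω) :
    ∀ (L : List ((Fin n → ℂ) → (Fin n → ℂ))) (X : (Fin n → ℂ) → (Fin n → ℂ)),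
    (∀ W ∈ L, DifferentiableOn ℂ W Ω) → DifferentiableOn ℂ X Ω →
    ∀ {ρ δ : ℝ}, 0 ≤ ρ → 0 < δ → ρ + L.length * δ ≤ R →
    vfNorm (nestedBracket L X) (closedBall p ρ)
      ≤ (2/δ)^L.length *
        ((L.map (fun W => vfNorm W (closedBall p R))).prod * vfNorm X (closedBall p R)) := by
  intro L
  induction L with
  | nil =>
    intro X _ hX ρ δ hρ0 hδ hle
    simp only [nestedBracket, List.foldr_nil, List.length_nil, pow_zero, List.map_nil,
      List.prod_nil, one_mul, Nat.cast_zero, zero_mul] at *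
    obtain ⟨C, hC⟩ := exists_vf_bound hX hsub
    have hρR : ρ ≤ R := by linarith
    exact vfNorm_le (vfNorm_nonneg _ _) fun z hz =>
      le_vfNorm hC (closedBall_subset_closedBall hρR hz)
  | cons W L ih =>
    intro X hL hX ρ δ hρ0 hδ hle
    have hlen : ((W :: L).length : ℝ) = L.length + 1 := by push_cast [List.length_cons]; ring
    have hlen0 : (0:ℝ) ≤ L.length := by positivity
    have hρδR : ρ + δ ≤ R := by nlinarith
    have hρR : ρ ≤ R := by nlinarith
    have hWd : DifferentiableOn ℂ W Ω := hL W (List.mem_cons_self)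
    have hLd : ∀ A ∈ L, DifferentiableOn ℂ A Ω := fun A hA => hL A (List.mem_cons_of_mem _ hA)
    set B := nestedBracket L X with hBdef
    have hBd : DifferentiableOn ℂ B Ω := nestedBracket_differentiableOn hΩ L X hLd hX
    have hsubρδ : closedBall p (ρ+δ) ⊆ Ω :=
      (closedBall_subset_closedBall hρδR).trans hsub
    obtain ⟨CB, hCB⟩ := exists_vf_bound hBd hsubρδ
    obtain ⟨CW, hCW⟩ := exists_vf_bound hWd hsub
    set NB := vfNorm B (closedBall p (ρ+δ)) with hNBdef
    set NW := vfNorm W (closedBall p R) with hNWdef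
    have hNB0 : 0 ≤ NB := vfNorm_nonneg _ _
    have hNW0 : 0 ≤ NW := vfNorm_nonneg _ _
    have hBbd : ∀ w ∈ closedBall p (ρ+δ), ‖B w‖ ≤ NB := fun w hw => le_vfNorm hCB hw
    have hWbd : ∀ w ∈ closedBall p R, ‖W w‖ ≤ NW := fun w hw => le_vfNorm hCW hw
    have hpt : ∀ z ∈ closedBall p ρ, ‖lieB W B z‖ ≤ 2/δ * (NW * NB) := by
      intro z hz
      have hzρδ : closedBall z δ ⊆ closedBall p (ρ+δ) := by
        refine closedBall_subset_closedBall' ?_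
        rw [mem_closedBall] at hz; linarith
      have hzR : closedBall z δ ⊆ closedBall p R :=
        hzρδ.trans (closedBall_subset_closedBall hρδR)
      have hzΩ : closedBall z δ ⊆ Ω := hzρδ.trans hsubρδ
      have hzpR : z ∈ closedBall p R := closedBall_subset_closedBall hρR hz
      have hzpρδ : z ∈ closedBall p (ρ+δ) :=
        closedBall_subset_closedBall (by linarith) hz
      have t1 : ‖fderiv ℂ B z (W z)‖ ≤ NB * NW / δ := by
        have := cauchy_fderiv_bound hΩ hBd hδ hzΩ (fun w hw => hBbd w (hzρδ hw)) (W z)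
        refine this.trans ?_
        gcongr
        exact hWbd z hzpR
      have t2 : ‖fderiv ℂ W z (B z)‖ ≤ NW * NB / δ := by
        have := cauchy_fderiv_bound hΩ hWd hδ hzΩ (fun w hw => hWbd w (hzR hw)) (B z)
        refine this.trans ?_
        gcongr
        exact hBbd z hzpρδ
      calc ‖lieB W B z‖ ≤ ‖fderiv ℂ B z (W z)‖ + ‖fderiv ℂ W z (B z)‖ := norm_sub_le _ _
        _ ≤ NB * NW / δ + NW * NB / δ := add_le_add t1 t2
        _ = 2/δ * (NW * NB) := by ring
    have step1 : vfNorm (lieB W B) (closedBall p ρ) ≤ 2/δ * (NW * NB) :=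
      vfNorm_le (by positivity) hpt
    have hIH : NB ≤ (2/δ)^L.length *
        ((L.map (fun A => vfNorm A (closedBall p R))).prod * vfNorm X (closedBall p R)) := by
      refine ih X hLd hX (by linarith) hδ ?_
      rw [hlen] at hle; linarith
    have : nestedBracket (W :: L) X = lieB W B := rfl
    rw [this]
    calc vfNorm (lieB W B) (closedBall p ρ) ≤ 2/δ * (NW * NB) := step1
      _ ≤ 2/δ * (NW * ((2/δ)^L.length *
          ((L.map (fun A => vfNorm A (closedBall p R))).prod * vfNorm X (closedBall p R)))) := by
          gcongr
      _ = (2/δ)^(W :: L).length *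
          (((W :: L).map (fun A => vfNorm A (closedBall p R))).prod
            * vfNorm X (closedBall p R)) := by
          rw [List.map_cons, List.prod_cons, List.length_cons, pow_succ]
          ring

lemma polyDisc_eq_closedBall {n : ℕ} (p : Fin n → ℂ) {r : ℝ} (hr : 0 ≤ r) :
    polyDisc p r = closedBall p r := by
  ext z
  simp only [polyDisc, mem_setOf_eq, mem_closedBall, dist_eq_norm,
    pi_norm_le_iff_of_nonneg hr, Pi.sub_apply]

/-- Nested commutator estimate: for `k ≥ 2` holomorphic vector fields `V₁,…,V_k` on a
neighborhood of `B_R(p)` and `0 < r < R`,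
`‖[V₁,[V₂,…,[V_{k−1},V_k]…]]‖_{B_r} ≤ (2n(k−1)/(R−r))^{k−1} Π ‖V_i‖_{B_R}`. -/
theorem stmt_2 (n : ℕ) (hn : 1 ≤ n) (p : Fin n → ℂ) (r R : ℝ) (hr : 0 < r) (hrR : r < R)
    (k : ℕ) (hk : 2 ≤ k) (Ω : Set (Fin n → ℂ)) (hΩ : IsOpen Ω) (hsub : polyDisc p R ⊆ Ω)
    (V : Fin k → (Fin n → ℂ) → (Fin n → ℂ)) (hV : ∀ i, DifferentiableOn ℂ (V i) Ω) :
    vfNorm (nestedBracket (List.ofFn fun j : Fin (k - 1) => V (Fin.castLE (Nat.sub_le k 1) j))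
        (V ⟨k - 1, by omega⟩)) (polyDisc p r)
      ≤ (2 * n * ((k : ℝ) - 1) / (R - r)) ^ (k - 1) * ∏ i, vfNorm (V i) (polyDisc p R) := by
  obtain ⟨m, rfl⟩ : ∃ m, k = m + 1 := ⟨k - 1, by omega⟩
  have hm : 1 ≤ m := by omega
  have hm0 : (0:ℝ) < m := by exact_mod_cast hm
  have hRr : 0 < R - r := by linarith
  set δ := (R - r) / m with hδdef
  have hδ : 0 < δ := by positivity
  have hpdr : polyDisc p r = closedBall p r := polyDisc_eq_closedBall p hr.le
  have hpdR : polyDisc p R = closedBall p R := polyDisc_eq_closedBall p (by linarith)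
  rw [hpdr]
  simp only [hpdR] at hsub ⊢
  set L : List ((Fin n → ℂ) → (Fin n → ℂ)) :=
    List.ofFn (fun j : Fin (m + 1 - 1) => V (Fin.castLE (Nat.sub_le (m+1) 1) j)) with hLdef
  have hlenL : L.length = m := by simp [hLdef]
  have hL : ∀ W ∈ L, DifferentiableOn ℂ W Ω := by
    intro W hW
    rw [hLdef, List.mem_ofFn] at hW
    obtain ⟨j, rfl⟩ := hW
    exact hV _
  have hmδ : (m:ℝ) * δ = R - r := by rw [hδdef]; field_simp
  have hlen : r + L.length * δ ≤ R := by rw [hlenL]; linarith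
  have est := main_est hΩ hsub L (V ⟨m + 1 - 1, by omega⟩) hL (hV _) hr.le hδ hlen
  refine est.trans ?_
  simp only [hlenL]
  have hP : (L.map (fun W => vfNorm W (closedBall p R))).prod
      = ∏ j : Fin m, vfNorm (V (Fin.castSucc j)) (closedBall p R) := by
    rw [hLdef, List.map_ofFn, List.prod_ofFn]
    rfl
  have hsplit : (∏ i, vfNorm (V i) (closedBall p R))
      = (∏ j : Fin m, vfNorm (V (Fin.castSucc j)) (closedBall p R))
        * vfNorm (V (Fin.last m)) (closedBall p R) := Fin.prod_univ_castSucc _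
  have hXeq : (⟨m + 1 - 1, by omega⟩ : Fin (m+1)) = Fin.last m := rfl
  have hcoef : 2/δ ≤ 2 * n * ((↑(m+1) : ℝ) - 1) / (R - r) := by
    rw [hδdef, div_div_eq_mul_div]
    have h1 : ((↑(m+1) : ℝ) - 1) = m := by push_cast; ring
    rw [h1]
    have h2 : (1:ℝ) ≤ n := by exact_mod_cast hn
    gcongr
    nlinarith
  have hPnn : 0 ≤ (∏ j : Fin m, vfNorm (V (Fin.castSucc j)) (closedBall p R)) :=
    Finset.prod_nonneg fun j _ => vfNorm_nonneg _ _
  calc (2/δ)^m * ((L.map (fun W => vfNorm W (closedBall p R))).prod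
        * vfNorm (V ⟨m + 1 - 1, by omega⟩) (closedBall p R))
      ≤ (2 * n * ((↑(m+1) : ℝ) - 1) / (R - r))^m
        * ((L.map (fun W => vfNorm W (closedBall p R))).prod
          * vfNorm (V ⟨m + 1 - 1, by omega⟩) (closedBall p R)) := by
        have hnn : 0 ≤ (L.map (fun W => vfNorm W (closedBall p R))).prod
            * vfNorm (V ⟨m + 1 - 1, by omega⟩) (closedBall p R) := by
          rw [hP, hXeq]
          exact mul_nonneg hPnn (vfNorm_nonneg _ _)
        exact mul_le_mul_of_nonneg_right (pow_le_pow_left₀ (by positivity) hcoef m) hnn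
    _ = (2 * n * ((↑(m+1) : ℝ) - 1) / (R - r))^(m + 1 - 1) * ∏ i, vfNorm (V i) (closedBall p R) := by
        rw [hP, hXeq, hsplit]; norm_num
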